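/- arXiv:math/0010045 — 5 statements merged into one kernel-verified Lean document; each statement's English description precedes it below -/
import Mathlib

section
/- Let p_1, p_2 be polynomials in N variables with integer coefficients. Then ht(p_1 · p_2) ≤ ht(p_1) + ht(p_2) + min(deg p_1, deg p_2) · ln(N+1), where ht is the logarithmic height and deg the total degree. -/
open MvPolynomial

lemma chooseLePow (N : ℕ) : ∀ d : ℕ, (N + d).choose d ≤ (N + 1) ^ d := by
  intro d
  induction d with
  | zero => simp
  | succ d ih =>
    have key : (N + (d+1)).choose (d+1) * (d+1) = (N + d + 1) * (N + d).choose d :=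
      (Nat.add_one_mul_choose_eq (N + d) d).symm
    have h2 : (N + (d+1)).choose (d+1) * (d+1) ≤ (N + 1) ^ (d+1) * (d+1) := by
      rw [key]
      calc (N + d + 1) * (N + d).choose d ≤ ((N+1)*(d+1)) * ((N+1)^d) := by
            apply Nat.mul_le_mul _ ih; nlinarith
        _ = (N + 1) ^ (d+1) * (d+1) := by ring
    exact Nat.le_of_mul_le_mul_right h2 (Nat.succ_pos d)

lemma cardLePow {N d : ℕ} (S : Finset (Fin N →₀ ℕ))
    (h : ∀ a ∈ S, (a.sum fun _ e => e) ≤ d) : S.card ≤ (N + 1) ^ d := by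
  classical
  have hcard : ∀ a : S, ((a : Fin N →₀ ℕ).toMultiset.map Fin.castSucc
      + Multiset.replicate (d - (a : Fin N →₀ ℕ).toMultiset.card) (Fin.last N)).card = d := by
    intro a
    have h1 := h a a.2
    have h2 : (a : Fin N →₀ ℕ).toMultiset.card = (a : Fin N →₀ ℕ).sum fun _ e => e := by
      rw [Finsupp.card_toMultiset]; rfl
    rw [Multiset.card_add, Multiset.card_map, Multiset.card_replicate]
    omega
  set f : S → Sym (Fin (N+1)) d := fun a => ⟨_, hcard a⟩ with hf
  have hinj : Function.Injective f := by
    intro a b hab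
    have h1 : ((a : Fin N →₀ ℕ).toMultiset.map Fin.castSucc
        + Multiset.replicate (d - (a : Fin N →₀ ℕ).toMultiset.card) (Fin.last N))
        = ((b : Fin N →₀ ℕ).toMultiset.map Fin.castSucc
        + Multiset.replicate (d - (b : Fin N →₀ ℕ).toMultiset.card) (Fin.last N)) :=
      congrArg Subtype.val hab
    have h2 := congrArg (Multiset.filter (fun x => x ≠ Fin.last N)) h1
    have hclean : ∀ c : Fin N →₀ ℕ, ∀ k : ℕ,
        Multiset.filter (fun x => x ≠ Fin.last N)
          (c.toMultiset.map Fin.castSucc + Multiset.replicate k (Fin.last N))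
        = c.toMultiset.map Fin.castSucc := by
      intro c k
      have e1 : Multiset.filter (fun x => x ≠ Fin.last N) (c.toMultiset.map Fin.castSucc)
          = c.toMultiset.map Fin.castSucc := by
        apply Multiset.filter_eq_self.2
        intro x hx
        obtain ⟨y, _, rfl⟩ := Multiset.mem_map.1 hx
        exact (Fin.castSucc_lt_last y).ne
      have e2 : Multiset.filter (fun x => x ≠ Fin.last N)
          (Multiset.replicate k (Fin.last N)) = 0 := by
        apply Multiset.filter_eq_nil.2
        intro x hx
        simp [Multiset.eq_of_mem_replicate hx]
      rw [Multiset.filter_add, e1, e2, add_zero]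
    rw [hclean, hclean] at h2
    have h3 := Multiset.map_injective (Fin.castSucc_injective N) h2
    exact Subtype.ext (Multiset.toFinsupp.symm.injective (by simpa using h3))
  calc S.card = Fintype.card S := (Fintype.card_coe S).symm
    _ ≤ Fintype.card (Sym (Fin (N+1)) d) := Fintype.card_le_of_injective f hinj
    _ = (N + d).choose d := by rw [Sym.card_sym_eq_choose, Fintype.card_fin]; congr 1; omega
    _ ≤ (N + 1) ^ d := chooseLePow N d

lemma natAbs_coeff_le {N : ℕ} (p : MvPolynomial (Fin N) ℤ) (m : Fin N →₀ ℕ) :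
    (p.coeff m).natAbs ≤ p.support.sup fun m => (p.coeff m).natAbs := by
  by_cases h : m ∈ p.support
  · exact Finset.le_sup (f := fun m => (p.coeff m).natAbs) h
  · simp [MvPolynomial.notMem_support_iff.1 h]

lemma supAbs_mul_le {N : ℕ} (p q : MvPolynomial (Fin N) ℤ) :
    ((p*q).support.sup fun m => ((p*q).coeff m).natAbs) ≤
      (N+1) ^ p.totalDegree *
        ((p.support.sup fun m => (p.coeff m).natAbs) *
         (q.support.sup fun m => (q.coeff m).natAbs)) := by
  classical
  set Bp := p.support.sup fun m => (p.coeff m).natAbs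
  set Bq := q.support.sup fun m => (q.coeff m).natAbs
  apply Finset.sup_le
  intro m _
  rw [MvPolynomial.coeff_mul]
  set T := (Finset.HasAntidiagonal.antidiagonal m).filter (fun x => x.1 ∈ p.support) with hT
  calc (∑ x ∈ Finset.HasAntidiagonal.antidiagonal m, p.coeff x.1 * q.coeff x.2).natAbs
      ≤ ∑ x ∈ Finset.HasAntidiagonal.antidiagonal m, (p.coeff x.1 * q.coeff x.2).natAbs := by
        have h := Finset.abs_sum_le_sum_abs (fun x => p.coeff x.1 * q.coeff x.2)
          (Finset.HasAntidiagonal.antidiagonal m)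
        simp only [Int.abs_eq_natAbs] at h
        exact_mod_cast h
    _ = ∑ x ∈ T, (p.coeff x.1 * q.coeff x.2).natAbs := by
        rw [hT]
        apply (Finset.sum_filter_of_ne _).symm
        intro x _ hx
        by_contra h
        exact hx (by simp [MvPolynomial.notMem_support_iff.1 h])
    _ ≤ T.card * (Bp * Bq) := by
        apply Finset.sum_le_card_nsmul
        intro x _
        rw [Int.natAbs_mul]
        exact Nat.mul_le_mul (natAbs_coeff_le p x.1) (natAbs_coeff_le q x.2)
    _ ≤ (N+1) ^ p.totalDegree * (Bp * Bq) := by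
        apply Nat.mul_le_mul_right
        calc T.card ≤ p.support.card := by
              apply Finset.card_le_card_of_injOn (fun x => x.1)
              · intro x hx
                exact (Finset.mem_filter.1 hx).2
              · intro x hx y hy hxy
                have hx' := Finset.HasAntidiagonal.mem_antidiagonal.1 (Finset.mem_filter.1 hx).1
                have hy' := Finset.HasAntidiagonal.mem_antidiagonal.1 (Finset.mem_filter.1 hy).1
                have h12 : x.1 = y.1 := hxy
                have hsum : y.1 + x.2 = y.1 + y.2 := by rw [h12] at hx'; rw [hx', hy']
                exact Prod.ext h12 (add_left_cancel hsum)
          _ ≤ (N+1) ^ p.totalDegree := by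
              apply cardLePow
              intro a ha
              exact MvPolynomial.le_totalDegree ha



open MvPolynomial

/-- Logarithmic height of a multivariate polynomial with integer coefficients:
`ln (1 + max |coefficients|)`. -/
noncomputable def polyHeight {N : ℕ} (p : MvPolynomial (Fin N) ℤ) : ℝ :=
  Real.log (1 + (p.support.sup fun m => (p.coeff m).natAbs : ℕ))

/-- `ht (p₁ p₂) ≤ ht p₁ + ht p₂ + min (deg p₁) (deg p₂) · ln (N + 1)` for
polynomials in `N` variables over `ℤ`. -/
theorem height_mul_le {N : ℕ} (p₁ p₂ : MvPolynomial (Fin N) ℤ) :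
    polyHeight (p₁ * p₂) ≤
      polyHeight p₁ + polyHeight p₂ +
        (min p₁.totalDegree p₂.totalDegree : ℕ) * Real.log (N + 1) := by
  classical
  have key : ((p₁*p₂).support.sup fun m => ((p₁*p₂).coeff m).natAbs) ≤
      (N+1) ^ (min p₁.totalDegree p₂.totalDegree) *
        ((p₁.support.sup fun m => (p₁.coeff m).natAbs) *
         (p₂.support.sup fun m => (p₂.coeff m).natAbs)) := by
    rcases le_total p₁.totalDegree p₂.totalDegree with h | h
    · rw [min_eq_left h]; exact supAbs_mul_le p₁ p₂
    · rw [min_eq_right h, mul_comm (p₁.support.sup _)]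
      calc ((p₁*p₂).support.sup fun m => ((p₁*p₂).coeff m).natAbs)
          = ((p₂*p₁).support.sup fun m => ((p₂*p₁).coeff m).natAbs) := by rw [mul_comm]
        _ ≤ _ := supAbs_mul_le p₂ p₁
  set B := (p₁*p₂).support.sup fun m => ((p₁*p₂).coeff m).natAbs
  set B₁ := p₁.support.sup fun m => (p₁.coeff m).natAbs
  set B₂ := p₂.support.sup fun m => (p₂.coeff m).natAbs
  set d := min p₁.totalDegree p₂.totalDegree
  have hone : 1 ≤ (N+1) ^ d := Nat.one_le_pow _ _ (Nat.succ_pos N)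
  have hnat : 1 + B ≤ (N+1) ^ d * ((1+B₁)*(1+B₂)) := by nlinarith [key, hone]
  have hposL : (0:ℝ) < 1 + (B:ℝ) := by positivity
  have hle : (1 + (B:ℝ)) ≤ ((N:ℝ)+1) ^ d * ((1+(B₁:ℝ))*(1+(B₂:ℝ))) := by
    exact_mod_cast hnat
  unfold polyHeight
  calc Real.log (1 + (B:ℝ)) ≤ Real.log (((N:ℝ)+1) ^ d * ((1+(B₁:ℝ))*(1+(B₂:ℝ)))) :=
        Real.log_le_log hposL hle
    _ = (d:ℝ) * Real.log ((N:ℝ)+1) + (Real.log (1+(B₁:ℝ)) + Real.log (1+(B₂:ℝ))) := by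
        rw [Real.log_mul (by positivity) (by positivity),
          Real.log_mul (by positivity) (by positivity), Real.log_pow]
    _ = Real.log (1+(B₁:ℝ)) + Real.log (1+(B₂:ℝ)) + (d:ℝ) * Real.log ((N:ℝ)+1) := by ring
end

section
/- (Schwartz–Zippel) Let q be a nonzero polynomial in s variables over a field (or over ℤ) of total degree at most D, and let Ω be a finite set of elements of the field with |Ω| elements. Then the number of points in Ω^s at which q vanishes is at most D·|Ω|^{s-1}; equivalently, a uniformly random point of Ω^s is a zero of q with probability at most D/|Ω|. -/
open MvPolynomial Finset

private lemma sz_zero_vars {k : Type*} [Field k] [DecidableEq k] {q : MvPolynomial (Fin 0) k}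
    (hq : q ≠ 0) (Ω : Finset k) :
    ((Fintype.piFinset fun _ : Fin 0 => Ω).filter fun x => eval x q = 0) = ∅ := by
  obtain ⟨a, rfl⟩ := C_surjective (Fin 0) q
  ext x
  simp only [Finset.mem_filter, Finset.notMem_empty, iff_false, not_and, eval_C]
  intro _
  simpa using hq

private lemma sz_aux {k : Type*} [Field k] [DecidableEq k] :
    ∀ (s : ℕ) (q : MvPolynomial (Fin s) k), q ≠ 0 → ∀ (D : ℕ), q.totalDegree ≤ D →
      ∀ Ω : Finset k,
      ((Fintype.piFinset fun _ : Fin s => Ω).filter fun x => eval x q = 0).card * Ω.card ≤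
        D * Ω.card ^ s := by
  intro s
  induction s with
  | zero =>
      intro q hq D hD Ω
      rw [sz_zero_vars hq]
      simp
  | succ n ih =>
      intro q hq D hD Ω
      set p := finSuccEquiv k n q with hp
      have hp0 : p ≠ 0 := by
        simp only [hp, ne_eq, EmbeddingLike.map_eq_zero_iff]
        exact hq
      set d := p.natDegree with hd
      set c := p.leadingCoeff with hc
      have hc0 : c ≠ 0 := Polynomial.leadingCoeff_ne_zero.mpr hp0
      have hdD : d ≤ D := by
        have h1 : p.natDegree = q.degreeOf 0 := natDegree_finSuccEquiv q
        have h2 : q.degreeOf 0 ≤ q.totalDegree := degreeOf_le_totalDegree q 0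
        omega
      have hcc : (finSuccEquiv k n q).coeff d = c := rfl
      have hcD : c.totalDegree ≤ D - d := by
        have h3 := totalDegree_coeff_finSuccEquiv_add_le q d (by rw [hcc]; exact hc0)
        rw [hcc] at h3
        omega
      set T := Fintype.piFinset fun _ : Fin n => Ω with hT
      set Z := (Fintype.piFinset fun _ : Fin (n + 1) => Ω).filter
        (fun x => eval x q = 0) with hZ
      set N := fun y : Fin n → k => (Ω.filter fun a => eval (Fin.cons a y) q = 0).card with hN
      -- fiberwise count
      have hmap : ∀ x ∈ Z, Fin.tail x ∈ T := by
        intro x hx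
        rw [hZ, Finset.mem_filter] at hx
        rw [hT, Fintype.mem_piFinset]
        intro i
        exact (Fintype.mem_piFinset.mp hx.1) i.succ
      have hcard : Z.card = ∑ y ∈ T, (Z.filter fun x => Fin.tail x = y).card :=
        Finset.card_eq_sum_card_fiberwise hmap
      have hfiber : ∀ y ∈ T, (Z.filter fun x => Fin.tail x = y).card ≤ N y := by
        intro y _
        apply Finset.card_le_card_of_injOn (fun x => x 0)
        · intro x hx
          rw [Finset.mem_coe, Finset.mem_filter] at hx
          obtain ⟨hxZ, hxy⟩ := hx
          rw [hZ, Finset.mem_filter] at hxZ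
          rw [Finset.mem_coe, Finset.mem_filter]
          constructor
          · exact (Fintype.mem_piFinset.mp hxZ.1) 0
          · rw [← hxy, Fin.cons_self_tail]
            exact hxZ.2
        · intro x₁ h₁ x₂ h₂ h0
          simp only [Finset.coe_filter, Set.mem_setOf_eq] at h₁ h₂
          have h0' : x₁ 0 = x₂ 0 := h0
          rw [← Fin.cons_self_tail x₁, ← Fin.cons_self_tail x₂, h₁.2, h₂.2, h0']
      have hstep1 : Z.card ≤ ∑ y ∈ T, N y := by
        rw [hcard]
        exact Finset.sum_le_sum hfiber
      -- when the leading coefficient does not vanish, at most d roots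
      have hgood : ∀ y : Fin n → k, eval y c ≠ 0 → N y ≤ d := by
        intro y hy
        set py := p.map (eval y) with hpy
        have hpycoeff : py.coeff d = eval y c := by
          rw [hpy, Polynomial.coeff_map, hcc]
        have hpy0 : py ≠ 0 := fun h => hy (by rw [← hpycoeff, h, Polynomial.coeff_zero])
        have hroots : ∀ a ∈ Ω.filter fun a => eval (Fin.cons a y) q = 0,
            a ∈ py.roots.toFinset := by
          intro a ha
          rw [Finset.mem_filter] at ha
          rw [Multiset.mem_toFinset, Polynomial.mem_roots hpy0, Polynomial.IsRoot.def, hpy,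
            ← eval_eq_eval_mv_eval']
          exact ha.2
        calc N y ≤ py.roots.toFinset.card := Finset.card_le_card hroots
          _ ≤ Multiset.card py.roots := Multiset.toFinset_card_le _
          _ ≤ py.natDegree := Polynomial.card_roots' py
          _ ≤ d := Polynomial.natDegree_map_le
      -- split the sum
      have hsplit : ∑ y ∈ T, N y =
          (∑ y ∈ T.filter fun y => eval y c = 0, N y) +
          (∑ y ∈ T.filter fun y => ¬ eval y c = 0, N y) :=
        (Finset.sum_filter_add_sum_filter_not T _ N).symm
      have hbad : (∑ y ∈ T.filter fun y => eval y c = 0, N y) ≤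
          (D - d) * Ω.card ^ n := by
        calc (∑ y ∈ T.filter fun y => eval y c = 0, N y)
            ≤ ∑ _y ∈ T.filter fun y => eval y c = 0, Ω.card :=
              Finset.sum_le_sum fun y _ => Finset.card_filter_le _ _
          _ = (T.filter fun y => eval y c = 0).card * Ω.card := by
              rw [Finset.sum_const, smul_eq_mul]
          _ ≤ (D - d) * Ω.card ^ n := ih c hc0 (D - d) hcD Ω
      have hgoodsum : (∑ y ∈ T.filter fun y => ¬ eval y c = 0, N y) ≤ d * Ω.card ^ n := by
        calc (∑ y ∈ T.filter fun y => ¬ eval y c = 0, N y)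
            ≤ ∑ _y ∈ T.filter fun y => ¬ eval y c = 0, d := by
              refine Finset.sum_le_sum fun y hy => ?_
              exact hgood y (Finset.mem_filter.mp hy).2
          _ = (T.filter fun y => ¬ eval y c = 0).card * d := by
              rw [Finset.sum_const, smul_eq_mul]
          _ ≤ T.card * d := Nat.mul_le_mul_right _ (Finset.card_filter_le _ _)
          _ = Ω.card ^ n * d := by
              rw [hT, Fintype.card_piFinset]
              simp [Finset.prod_const]
          _ = d * Ω.card ^ n := Nat.mul_comm _ _
      have hZn : Z.card ≤ D * Ω.card ^ n := by
        have : (D - d) * Ω.card ^ n + d * Ω.card ^ n = D * Ω.card ^ n := by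
          rw [← Nat.add_mul, Nat.sub_add_cancel hdD]
        omega
      calc Z.card * Ω.card ≤ (D * Ω.card ^ n) * Ω.card := Nat.mul_le_mul_right _ hZn
        _ = D * Ω.card ^ (n + 1) := by rw [pow_succ, Nat.mul_assoc]

/-- **Schwartz–Zippel.** A nonzero polynomial `q` in `s` variables over a field,
of total degree at most `D`, has at most `D · |Ω|^(s-1)` zeros in `Ω^s` for any
finite set `Ω` of the field; equivalently, a uniformly random point of `Ω^s` is
a zero of `q` with probability at most `D / |Ω|`. -/
theorem schwartz_zippel {k : Type*} [Field k] [DecidableEq k] {s : ℕ} {q : MvPolynomial (Fin s) k}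
    (hq : q ≠ 0) {D : ℕ} (hD : q.totalDegree ≤ D) (Ω : Finset k) :
    ((Fintype.piFinset fun _ : Fin s => Ω).filter fun x => eval x q = 0).card ≤
      D * Ω.card ^ (s - 1) := by
  cases s with
  | zero =>
      rw [sz_zero_vars hq]
      simp
  | succ m =>
      rcases Nat.eq_zero_or_pos Ω.card with h0 | h1
      · have : ((Fintype.piFinset fun _ : Fin (m + 1) => Ω).filter
            fun x => eval x q = 0).card ≤ Ω.card ^ (m + 1) := by
          calc _ ≤ (Fintype.piFinset fun _ : Fin (m + 1) => Ω).card :=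
                Finset.card_filter_le _ _
            _ = Ω.card ^ (m + 1) := by rw [Fintype.card_piFinset]; simp [Finset.prod_const]
        have h2 : (0 : ℕ) ^ (m + 1) = 0 := Nat.zero_pow (Nat.succ_pos m)
        rw [h0, h2, Nat.le_zero] at this
        rw [this]
        exact Nat.zero_le _
      · have h := sz_aux (m + 1) q hq D hD Ω
        rw [pow_succ, ← Nat.mul_assoc] at h
        simpa using Nat.le_of_mul_le_mul_right h h1
end

section
/- Let S ⊆ T be a finitely generated field extension in characteristic zero. Then the transcendence degree of T over S equals the dimension of the T-vector space Ω_{T/S} of Kähler differentials. -/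
universe u v


open TrivSqZeroExt in
theorem exists_derivation_extension
    {R : Type*} {A B M : Type u} [CommRing R] [CommRing A] [CommRing B]
    [Algebra R A] [Algebra R B] [Algebra A B] [IsScalarTower R A B]
    [Algebra.FormallySmooth A B]
    [AddCommGroup M] [Module B M] [Module A M] [Module R M]
    [IsScalarTower A B M] [IsScalarTower R B M]
    (d : Derivation R A M) :
    ∃ D : Derivation R B M, ∀ a : A, D (algebraMap A B a) = d a := by
  letI : Module Bᵐᵒᵖ M := Module.compHom M ((RingHom.id B).fromOpposite mul_comm)
  haveI : IsCentralScalar B M := ⟨fun b m => rfl⟩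
  haveI : SMulCommClass B Bᵐᵒᵖ M := ⟨fun b c m => smul_comm b (MulOpposite.unop c) m⟩
  haveI : IsScalarTower R Bᵐᵒᵖ M := ⟨fun r c m => by
    show (r • MulOpposite.unop c) • m = r • MulOpposite.unop c • m
    rw [smul_assoc]⟩
  have key : ∀ (a : A) (m : M), MulOpposite.op (algebraMap A B a) • m = a • m := fun a m => by
    show algebraMap A B a • m = a • m
    exact algebraMap_smul B a m
  -- the R-algebra hom A →ₐ[R] E, a ↦ (algebraMap a, d a)
  letI φ : A →ₐ[R] TrivSqZeroExt B M :=
    { toFun := fun a => inl (algebraMap A B a) + inr (d a)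
      map_one' := by simp
      map_mul' := fun a b => by
        show inl (algebraMap A B (a * b)) + inr (d (a * b)) =
          (inl (algebraMap A B a) + inr (d a)) * (inl (algebraMap A B b) + inr (d b))
        ext
        · simp
        · simp only [snd_add, snd_inl, snd_inr, zero_add, snd_mul, fst_add, fst_inl, fst_inr,
            add_zero, d.leibniz, smul_zero, smul_add, key, algebraMap_smul]
      map_zero' := by simp
      map_add' := fun a b => by
        show inl (algebraMap A B (a + b)) + inr (d (a + b)) = _ + _
        rw [map_add, map_add, inl_add, inr_add]; abel_nf
      commutes' := fun r => by
        show inl (algebraMap A B (algebraMap R A r)) + inr (d (algebraMap R A r)) = _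
        rw [d.map_algebraMap, inr_zero, add_zero, ← IsScalarTower.algebraMap_apply]
        rfl }
  letI : Algebra A (TrivSqZeroExt B M) := φ.toRingHom.toAlgebra
  letI ψ : TrivSqZeroExt B M →ₐ[A] B :=
    { toFun := fst
      map_one' := fst_one
      map_mul' := fst_mul
      map_zero' := fst_zero (M := M)
      map_add' := fst_add
      commutes' := fun a => by
        show fst (inl (algebraMap A B a) + inr (d a)) = algebraMap A B a
        simp }
  have hsurj : Function.Surjective ψ := fun b => ⟨inl b, rfl⟩
  have hker : ∀ z : TrivSqZeroExt B M, z ∈ RingHom.ker (ψ : TrivSqZeroExt B M →+* B) ↔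
      fst z = 0 := fun z => Iff.rfl
  have hnil : IsNilpotent (RingHom.ker (ψ : TrivSqZeroExt B M →+* B)) := by
    refine ⟨2, ?_⟩
    rw [pow_two]
    refine eq_bot_iff.mpr (Ideal.mul_le.mpr fun x hx y hy => ?_)
    rw [Ideal.mem_bot]
    ext
    · show fst (x * y) = fst 0
      rw [fst_mul, (hker x).mp hx, zero_mul, fst_zero]
    · show snd (x * y) = snd 0
      rw [snd_mul, (hker x).mp hx, (hker y).mp hy, zero_smul, MulOpposite.op_zero, zero_smul,
        add_zero, snd_zero]
  letI σ : B →ₐ[A] TrivSqZeroExt B M :=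
    Algebra.FormallySmooth.liftOfSurjective (AlgHom.id A B) ψ hsurj hnil
  have hσ : ∀ b, fst (σ b) = b := fun b =>
    Algebra.FormallySmooth.liftOfSurjective_apply (AlgHom.id A B) ψ hsurj hnil b
  refine ⟨{ toLinearMap :=
            { toFun := fun b => snd (σ b)
              map_add' := fun a b => by show snd (σ (a + b)) = snd (σ a) + snd (σ b); rw [map_add, snd_add]
              map_smul' := fun r b => by
                show snd (σ (r • b)) = r • snd (σ b)
                have h1 : (r • b : B) = algebraMap A B (algebraMap R A r) * b := by
                  rw [← IsScalarTower.algebraMap_apply, Algebra.smul_def]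
                have h2 : σ (algebraMap A B (algebraMap R A r)) = φ (algebraMap R A r) :=
                  σ.commutes _
                have h3 : φ (algebraMap R A r) = inl (algebraMap R B r) := by
                  show inl (algebraMap A B (algebraMap R A r)) + inr (d (algebraMap R A r)) = _
                  rw [d.map_algebraMap, inr_zero, add_zero, ← IsScalarTower.algebraMap_apply]
                rw [h1, map_mul, h2, h3, snd_mul, fst_inl, snd_inl, smul_zero,
                  add_zero, algebraMap_smul]
              }
            map_one_eq_zero' := by
              show snd (σ 1) = 0
              rw [map_one, snd_one]
            leibniz' := fun a b => by
              show snd (σ (a * b)) = a • snd (σ b) + b • snd (σ a)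
              rw [map_mul, snd_mul, hσ, hσ]
              rfl }, ?_⟩
  intro a
  show snd (σ (algebraMap A B a)) = d a
  rw [σ.commutes a]
  show snd (inl (algebraMap A B a) + inr (d a)) = d a
  simp

set_option maxHeartbeats 1000000 in
set_option synthInstance.maxHeartbeats 400000 in
/-- For a finitely generated field extension `S ⊆ T` in characteristic zero, the
transcendence degree of `T` over `S` (the cardinality of any transcendence
basis) equals the dimension of the `T`-vector space `Ω[T⁄S]` of Kähler
differentials. -/
theorem trdeg_eq_rank_kaehler
    (S : Type*) (T : Type u) [Field S] [Field T] [Algebra S T] [CharZero S]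
    (hfg : ∃ s : Finset T, IntermediateField.adjoin S (s : Set T) = ⊤)
    {ι : Type v} (x : ι → T) (hx : IsTranscendenceBasis S x) :
    Cardinal.lift.{u} (Cardinal.mk ι) = Cardinal.lift.{v} (Module.rank T (Ω[T⁄S])) := by
  classical
  have hxi : AlgebraicIndependent S x := hx.1
  set F : IntermediateField S T := IntermediateField.adjoin S (Set.range x) with hFdef
  haveI : Algebra.IsAlgebraic F T := hx.isAlgebraic_field
  haveI : CharZero F := charZero_of_injective_algebraMap (algebraMap S F).injective
  haveI : Algebra.IsIntegral F T := Algebra.IsAlgebraic.isIntegral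
  haveI : Algebra.FormallyEtale F T := Algebra.FormallyEtale.of_isSeparable F T
  set R : Type _ := MvPolynomial ι S with hRdef
  set K : Type _ := FractionRing R with hKdef
  let e : K ≃ₐ[S] F := hxi.aevalEquivField
  have he : ∀ p : R, (e (algebraMap R K p) : T) = MvPolynomial.aeval x p := fun p =>
    hxi.aevalEquivField_algebraMap_apply_coe p
  -- the ring hom K →+* T
  let g : K →+* T := (algebraMap F T).comp (e : K →+* F)
  have hg : ∀ p : R, g (algebraMap R K p) = MvPolynomial.aeval x p := he
  -- Values of elements of F in T are ratios of elements of the adjoined subalgebra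
  have hratio : ∀ f : F, ∃ a b : T, a ∈ Algebra.adjoin S (Set.range x) ∧
      b ∈ Algebra.adjoin S (Set.range x) ∧ (algebraMap F T f) = a / b := by
    intro f
    obtain ⟨k, rfl⟩ := e.surjective f
    obtain ⟨p, q, hq, rfl⟩ := IsFractionRing.div_surjective (A := R) k
    refine ⟨MvPolynomial.aeval x p, MvPolynomial.aeval x q, ?_, ?_, ?_⟩
    · rw [Algebra.adjoin_range_eq_range_aeval]; exact ⟨p, rfl⟩
    · rw [Algebra.adjoin_range_eq_range_aeval]; exact ⟨q, rfl⟩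
    · show g _ = _
      rw [map_div₀, hg, hg]
  -- ** Spanning **
  have hspan : Submodule.span T (Set.range fun i => (KaehlerDifferential.D S T) (x i)) = ⊤ := by
    set V := Submodule.span T (Set.range fun i => (KaehlerDifferential.D S T) (x i)) with hV
    let δ : Derivation S T (Ω[T⁄S] ⧸ V) := V.mkQ.compDer (KaehlerDifferential.D S T)
    have hδA : ∀ a ∈ Algebra.adjoin S (Set.range x), δ a = 0 := by
      have : Set.EqOn δ (0 : Derivation S T (Ω[T⁄S] ⧸ V)) (Set.range x) := by
        rintro _ ⟨i, rfl⟩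
        show V.mkQ (KaehlerDifferential.D S T (x i)) = 0
        rw [Submodule.mkQ_apply, Submodule.Quotient.mk_eq_zero]
        exact Submodule.subset_span ⟨i, rfl⟩
      intro a ha
      exact Derivation.eqOn_adjoin this ha
    have hδF : ∀ f : F, δ (algebraMap F T f) = 0 := by
      intro f
      obtain ⟨a, b, ha, hb, hab⟩ := hratio f
      rw [hab, Derivation.leibniz_div, hδA a ha, hδA b hb, smul_zero, smul_zero, sub_zero,
        smul_zero]
    -- δ is F-linear, hence a derivation over F, hence zero
    letI : Module F (Ω[T⁄S] ⧸ V) := { Module.compHom _ (algebraMap F T) with smul := (· • ·) }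
    haveI : IsScalarTower F T (Ω[T⁄S] ⧸ V) := ⟨fun f t q => by
      show ((f • t) • q) = (algebraMap F T f) • (t • q)
      rw [Algebra.smul_def f t, mul_smul]⟩
    let δ' : Derivation F T (Ω[T⁄S] ⧸ V) :=
      { toLinearMap :=
        { toFun := δ
          map_add' := fun a b => δ.map_add a b
          map_smul' := fun f t => by
            show δ ((algebraMap F T f) * t) = f • δ t
            rw [δ.leibniz, hδF f, smul_zero, add_zero]
            rfl }
        map_one_eq_zero' := δ.map_one_eq_zero
        leibniz' := fun a b => δ.leibniz a b }
    have hδ : ∀ t : T, δ t = 0 := by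
      intro t
      have h1 : δ' t = δ'.liftKaehlerDifferential (KaehlerDifferential.D F T t) :=
        (δ'.liftKaehlerDifferential_comp_D t).symm
      have h2 : KaehlerDifferential.D F T t = 0 := Subsingleton.elim _ _
      show δ' t = 0
      rw [h1, h2, map_zero]
    rw [eq_top_iff, ← KaehlerDifferential.span_range_derivation, Submodule.span_le]
    rintro _ ⟨t, rfl⟩
    have := hδ t
    rwa [show δ t = V.mkQ (KaehlerDifferential.D S T t) from rfl, Submodule.mkQ_apply,
      Submodule.Quotient.mk_eq_zero] at this
  -- ** Linear independence **
  have hind : LinearIndependent T (fun i => (KaehlerDifferential.D S T) (x i)) := by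
    rw [linearIndependent_iff']
    intro s c hsum i hi
    -- construct the partial derivative with respect to `i`
    haveI : Algebra.FormallySmooth R K :=
      Algebra.FormallySmooth.of_isLocalization (nonZeroDivisors R)
    let d1 : Derivation S R K := (Algebra.linearMap R K).compDer (MvPolynomial.pderiv i)
    obtain ⟨D1, hD1⟩ := exists_derivation_extension (A := R) (B := K) (M := K) d1
    -- transport D1 along e to a derivation of F
    let D2 : Derivation S F F :=
      { toLinearMap := (e.toLinearMap.comp D1.toLinearMap).comp e.symm.toLinearMap
        map_one_eq_zero' := by
          show e (D1 (e.symm 1)) = 0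
          rw [map_one, D1.map_one_eq_zero, map_zero]
        leibniz' := fun a b => by
          show e (D1 (e.symm (a * b))) = a • e (D1 (e.symm b)) + b • e (D1 (e.symm a))
          rw [map_mul, D1.leibniz, map_add, smul_eq_mul, smul_eq_mul, map_mul, map_mul,
            AlgEquiv.apply_symm_apply, AlgEquiv.apply_symm_apply, smul_eq_mul, smul_eq_mul] }
    have hD2 : ∀ p : R, D2 (e (algebraMap R K p)) = e (algebraMap R K (MvPolynomial.pderiv i p)) := by
      intro p
      show e (D1 (e.symm (e (algebraMap R K p)))) = _
      rw [AlgEquiv.symm_apply_apply, hD1]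
      rfl
    let d2 : Derivation S F T := (Algebra.linearMap F T).compDer D2
    obtain ⟨D3, hD3⟩ := exists_derivation_extension (A := F) (B := T) (M := T) d2
    have hD3x : ∀ j, D3 (x j) = if j = i then 1 else 0 := by
      intro j
      have hmem : x j ∈ F := IntermediateField.subset_adjoin S _ ⟨j, rfl⟩
      have hxj : (algebraMap F T) ⟨x j, hmem⟩ = x j := rfl
      have hej : e (algebraMap R K (MvPolynomial.X j)) = ⟨x j, hmem⟩ := by
        apply Subtype.ext
        rw [he, MvPolynomial.aeval_X]
      rw [← hxj, hD3]
      show algebraMap F T (D2 ⟨x j, hmem⟩) = _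
      rw [← hej, hD2]
      by_cases hji : j = i
      · subst hji; rw [MvPolynomial.pderiv_X_self, map_one, map_one, map_one, if_pos rfl]
      · rw [MvPolynomial.pderiv_X_of_ne hji, map_zero, map_zero, map_zero, if_neg hji]
    have happ := congrArg (D3.liftKaehlerDifferential) hsum
    rw [map_sum, map_zero] at happ
    have : ∀ j ∈ s, D3.liftKaehlerDifferential (c j • (KaehlerDifferential.D S T) (x j)) =
        if j = i then c j else 0 := by
      intro j _
      rw [map_smul, D3.liftKaehlerDifferential_comp_D, hD3x j]
      split <;> simp
    rw [Finset.sum_congr rfl this, Finset.sum_ite_eq' s i (fun j => c j), if_pos hi] at happ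
    exact happ
  -- ** Conclusion **
  let b : Module.Basis ι T (Ω[T⁄S]) := Module.Basis.mk hind (by rw [hspan])
  exact b.mk_eq_rank
end

section
/- Let k ⊆ K be a field extension with trdeg_k K = N, and let y_1, …, y_m ∈ K. If L is the subfield of K generated over k by all elements y_i^{(j)} for 0 ≤ j ≤ N obtained by applying a fixed derivation δ of K (with δ(k) ⊆ k) to the y_i, then each y_i^{(N+1)} := δ^{N+1}(y_i) is algebraic over L; in particular, the field generated by all δ^j(y_i) for all j ≥ 0 is an algebraic extension of L. -/
open Polynomial

section Helpers
variable {K : Type*} [Field K]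

/-- Transfer algebraicity along a compatible ring hom of (base) fields. -/
theorem isAlg_transfer {A B : Type*} [Field A] [Field B] [Algebra A K] [Algebra B K]
    (f : A →+* B) (hf : ∀ a, algebraMap B K (f a) = algebraMap A K a)
    {x : K} (h : IsAlgebraic A x) : IsAlgebraic B x := by
  obtain ⟨p, hp0, hpx⟩ := h
  refine ⟨p.map f, fun hz => hp0 (Polynomial.map_injective f f.injective (by simpa using hz)), ?_⟩
  rw [Polynomial.aeval_def, Polynomial.eval₂_map]
  rw [Polynomial.aeval_def] at hpx
  convert hpx using 2
  exacts [rfl, RingHom.ext hf]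

theorem isAlg_mono {E F : Subfield K} (h : E ≤ F) {x : K}
    (hx : IsAlgebraic ↥E x) : IsAlgebraic ↥F x :=
  isAlg_transfer (K := K) (Subfield.inclusion h) (fun a => rfl) hx

theorem mem_isAlg {E : Subfield K} {x : K} (h : x ∈ E) : IsAlgebraic ↥E x :=
  isAlgebraic_algebraMap (⟨x, h⟩ : ↥E)

theorem coeff_sum_monomial {S : Type*} [Semiring S] (n j : ℕ) (f : ℕ → S) :
    (∑ i ∈ Finset.range n, monomial i (f i)).coeff j = if j < n then f j else 0 := by
  classical
  rw [Polynomial.finset_sum_coeff]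
  simp_rw [Polynomial.coeff_monomial]
  rw [Finset.sum_ite_eq' (Finset.range n) j f]
  simp

/-- Build algebraicity from a coefficient function with a nonzero value. -/
theorem isAlg_of_coeffs {S : Type*} [CommRing S] [Algebra S K] (a : K) (n : ℕ) (c : ℕ → S)
    (hne : ∃ i < n, algebraMap S K (c i) ≠ 0)
    (hev : ∑ i ∈ Finset.range n, algebraMap S K (c i) * a ^ i = 0) : IsAlgebraic S a := by
  classical
  refine ⟨∑ i ∈ Finset.range n, monomial i (c i), ?_, ?_⟩
  · obtain ⟨i, hi, hne⟩ := hne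
    intro hz
    apply hne
    have := congrArg (fun q => Polynomial.coeff q i) hz
    simp only [coeff_sum_monomial, if_pos hi, Polynomial.coeff_zero] at this
    rw [this, map_zero]
  · rw [map_sum]
    simpa [Polynomial.aeval_monomial] using hev

/-- Extract a coefficient-level relation from algebraicity. -/
theorem coeffs_of_isAlg {S : Type*} [CommRing S] [Algebra S K] {a : K}
    (h : IsAlgebraic S a) (hinj : Function.Injective (algebraMap S K)) :
    ∃ (n : ℕ) (c : ℕ → S), (∃ i < n, algebraMap S K (c i) ≠ 0) ∧
      ∑ i ∈ Finset.range n, algebraMap S K (c i) * a ^ i = 0 := by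
  obtain ⟨p, hp0, hpx⟩ := h
  refine ⟨p.natDegree + 1, fun i => p.coeff i, ?_, ?_⟩
  · refine ⟨p.natDegree, Nat.lt_succ_self _, ?_⟩
    simp only [ne_eq, map_eq_zero_iff _ hinj]
    exact Polynomial.leadingCoeff_ne_zero.mpr hp0
  · have := p.as_sum_range' (p.natDegree + 1) (Nat.lt_succ_self _)
    calc ∑ i ∈ Finset.range (p.natDegree + 1), algebraMap S K (p.coeff i) * a ^ i
        = Polynomial.aeval a p := by
          conv_rhs => rw [this]
          rw [map_sum]
          simp [Polynomial.aeval_monomial]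
      _ = 0 := hpx

theorem subfield_closure_subring_closure (s : Set K) :
    Subfield.closure ((Subring.closure s : Subring K) : Set K) = Subfield.closure s := by
  refine le_antisymm (Subfield.closure_le.mpr ?_) (Subfield.closure_mono Subring.subset_closure)
  intro x hx
  exact (Subring.closure_le (t := (Subfield.closure s).toSubring)).mpr
    (fun y hy => Subfield.subset_closure hy) hx

theorem closure_closure_union (A B : Set K) :
    Subfield.closure ((Subfield.closure A : Subfield K) ∪ B) = Subfield.closure (A ∪ B) := by
  rw [Subfield.closure_union, Subfield.closure_union, Subfield.closure_eq]

end Helpers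


section Exchange
variable {K : Type*} [Field K]

set_option synthInstance.maxHeartbeats 400000 in
set_option maxHeartbeats 1000000 in
/-- Algebraic over a field extended by algebraic elements is algebraic. -/
theorem isAlg_trans (M : Subfield K) (S : Set K) (hS : ∀ u ∈ S, IsAlgebraic ↥M u) {w : K}
    (hw : IsAlgebraic ↥(Subfield.closure ((M : Set K) ∪ S)) w) : IsAlgebraic ↥M w := by
  set A := algebraicClosure ↥M K with hA
  have hle : Subfield.closure ((M : Set K) ∪ S) ≤ A.toSubfield := by
    rw [Subfield.closure_le]
    rintro u (hu | hu)
    · exact (IntermediateField.mem_toSubfield _ _).mpr (A.algebraMap_mem ⟨u, hu⟩)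
    · exact (IntermediateField.mem_toSubfield _ _).mpr (mem_algebraicClosure_iff.mpr (hS u hu))
  have hwA : IsAlgebraic ↥A w :=
    isAlg_transfer (K := K)
      (f := { toFun := fun a => (⟨a.1, (IntermediateField.mem_toSubfield _ _).mp (hle a.2)⟩ : ↥A),
              map_one' := rfl, map_mul' := fun _ _ => rfl,
              map_zero' := rfl, map_add' := fun _ _ => rfl }) (fun a => rfl) hw
  haveI : Algebra.IsIntegral ↥M ↥A :=
    ⟨fun a => isAlgebraic_iff_isIntegral.mp ((algebraicClosure.isAlgebraic ↥M K).isAlgebraic a)⟩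
  exact isAlgebraic_iff_isIntegral.mpr
    (isIntegral_trans (R := ↥M) (A := ↥A) (B := K) w (isAlgebraic_iff_isIntegral.mp hwA))

/-- Clearing denominators: algebraic over the fraction field of a subring. -/
theorem isAlg_of_closure (R : Subring K) {a : K}
    (h : IsAlgebraic ↥(Subfield.closure (R : Set K)) a) : IsAlgebraic ↥R a := by
  classical
  obtain ⟨p, hp0, hpa⟩ := h
  let n := p.natDegree
  let c : ℕ → K := fun i => (p.coeff i : K)
  have hc : ∀ i, c i = (p.coeff i : K) := fun _ => rfl
  have hmem : ∀ i, c i ∈ Subfield.closure (R : Set K) := fun i => (p.coeff i).2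
  have key : ∀ i, ∃ u v : K, u ∈ R ∧ v ∈ R ∧ (c i ≠ 0 → v ≠ 0) ∧ u / v = c i := by
    intro i
    obtain ⟨u, hu, v, hv, huv⟩ := Subfield.mem_closure_iff.mp (hmem i)
    rw [Subring.closure_eq] at hu hv
    exact ⟨u, v, hu, hv, fun hcne hv0 => hcne (by rw [← huv, hv0, div_zero]), huv⟩
  choose u v hu hv hvne huv using key
  let v' : ℕ → K := fun i => if c i = 0 then 1 else v i
  have hv' : ∀ i, v' i = if c i = 0 then 1 else v i := fun _ => rfl
  have hv'R : ∀ i, v' i ∈ R := fun i => by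
    by_cases h : c i = 0 <;> simp [hv', h, hv i, R.one_mem]
  have hv'0 : ∀ i, v' i ≠ 0 := fun i => by
    by_cases h : c i = 0
    · simp [hv', h]
    · simpa [hv', h] using hvne i h
  let d : K := ∏ i ∈ Finset.range (n+1), v' i
  have hd : d = ∏ i ∈ Finset.range (n+1), v' i := rfl
  have hd0 : d ≠ 0 := Finset.prod_ne_zero_iff.mpr (fun i _ => hv'0 i)
  have hmul : ∀ i, d * c i ∈ R := by
    intro i
    by_cases h : c i = 0
    · simp [h, R.zero_mem]
    · by_cases hi : i < n + 1
      · have hvi : v' i = v i := if_neg h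
        have h2 : v' i * c i = u i := by
          rw [hvi, ← huv i, mul_comm, div_mul_cancel₀ _ (hvne i h)]
        have heq : d * c i = (∏ j ∈ (Finset.range (n+1)).erase i, v' j) * u i := by
          rw [hd, ← Finset.prod_erase_mul _ _ (Finset.mem_range.mpr hi), mul_assoc, h2]
        rw [heq]
        exact R.mul_mem (Subring.prod_mem R (fun j _ => hv'R j)) (hu i)
      · exfalso
        apply h
        have : p.coeff i = 0 := Polynomial.coeff_eq_zero_of_natDegree_lt (by omega)
        simp [hc, this]
  refine isAlg_of_coeffs a (n+1) (fun i => (⟨d * c i, hmul i⟩ : ↥R)) ?_ ?_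
  · refine ⟨n, Nat.lt_succ_self _, ?_⟩
    have h1 : algebraMap ↥R K ⟨d * c n, hmul n⟩ = d * c n := rfl
    rw [h1]
    refine mul_ne_zero hd0 ?_
    intro h0
    exact Polynomial.leadingCoeff_ne_zero.mpr hp0 (Subtype.ext h0)
  · have h1 : ∀ i, algebraMap ↥R K ⟨d * c i, hmul i⟩ = d * c i := fun _ => rfl
    simp_rw [h1, mul_assoc, ← Finset.mul_sum]
    have h2 : ∑ i ∈ Finset.range (n+1), c i * a ^ i = 0 := by
      have h3 := p.as_sum_range' (n + 1) (Nat.lt_succ_self _)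
      calc ∑ i ∈ Finset.range (n+1), c i * a ^ i = Polynomial.aeval a p := by
            conv_rhs => rw [h3]
            rw [map_sum]
            simp only [Polynomial.aeval_monomial]
            exact Finset.sum_congr rfl (fun x _ => rfl)
        _ = 0 := hpa
    rw [h2, mul_zero]


/-- The two-element exchange lemma. -/
theorem two_elem (G : Subfield K) (a b : K) (hna : ¬ IsAlgebraic ↥G a)
    (hab : IsAlgebraic ↥(Subfield.closure ((G : Set K) ∪ {b})) a) :
    IsAlgebraic ↥(Subfield.closure ((G : Set K) ∪ {a})) b := by
  classical
  set R := Subring.closure ((G : Set K) ∪ {b}) with hR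
  have haR : IsAlgebraic ↥R a := by
    refine isAlg_of_closure R ?_
    rwa [subfield_closure_subring_closure]
  set ev : Polynomial ↥G →+* K := (Polynomial.aeval b : Polynomial ↥G →ₐ[↥G] K).toRingHom with hev
  have hRle : R ≤ ev.range := by
    rw [hR, Subring.closure_le]
    rintro u (hu | hu)
    · refine ⟨C ⟨u, hu⟩, ?_⟩
      have h1 : ev (C ⟨u, hu⟩) = algebraMap ↥G K ⟨u, hu⟩ := by
        rw [hev]; simp only [AlgHom.toRingHom_eq_coe, RingHom.coe_coe]; rw [aeval_C]
      rw [h1]; rfl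
    · rw [Set.mem_singleton_iff] at hu
      exact ⟨X, by simp [hev, hu]⟩
  obtain ⟨n₀, c, ⟨i0, hi0, hc0⟩, hcev⟩ := coeffs_of_isAlg haR Subtype.val_injective
  have hql : ∀ i, ∃ Q : Polynomial ↥G, ev Q = (c i : K) := fun i => hRle (c i).2
  choose q hq using hql
  set Sb := Finset.sup (Finset.range n₀) (fun t => (q t).natDegree) with hSb
  set r : ℕ → K := fun s => ∑ t ∈ Finset.range n₀, ((q t).coeff s : K) * a ^ t with hr
  have hevq : ∀ t ∈ Finset.range n₀,
      (ev (q t) : K) = ∑ s ∈ Finset.range (Sb+1), ((q t).coeff s : K) * b ^ s := by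
    intro t ht
    have hdeg : (q t).natDegree < Sb + 1 := Nat.lt_succ_of_le (Finset.le_sup (f := fun t => (q t).natDegree) ht)
    conv_lhs => rw [show ev (q t) = Polynomial.aeval b (q t) from rfl,
      (q t).as_sum_range' _ hdeg]
    rw [map_sum]
    exact Finset.sum_congr rfl fun s _ => by rw [Polynomial.aeval_monomial]; rfl
  have claim1 : ∑ s ∈ Finset.range (Sb+1), r s * b ^ s = 0 := by
    calc ∑ s ∈ Finset.range (Sb+1), r s * b ^ s
        = ∑ s ∈ Finset.range (Sb+1), ∑ t ∈ Finset.range n₀,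
            ((q t).coeff s : K) * a ^ t * b ^ s := by
          refine Finset.sum_congr rfl fun s _ => ?_
          rw [hr, Finset.sum_mul]
      _ = ∑ t ∈ Finset.range n₀, ∑ s ∈ Finset.range (Sb+1),
            ((q t).coeff s : K) * a ^ t * b ^ s := Finset.sum_comm
      _ = ∑ t ∈ Finset.range n₀,
            (∑ s ∈ Finset.range (Sb+1), ((q t).coeff s : K) * b ^ s) * a ^ t := by
          refine Finset.sum_congr rfl fun t _ => ?_
          rw [Finset.sum_mul]
          exact Finset.sum_congr rfl fun s _ => by ring
      _ = ∑ t ∈ Finset.range n₀, (c t : K) * a ^ t := by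
          refine Finset.sum_congr rfl fun t ht => ?_
          rw [← hevq t ht, hq t]
      _ = 0 := hcev
  have claim2 : ∃ s < Sb + 1, r s ≠ 0 := by
    by_contra hcon
    push_neg at hcon
    have hq0 : ∀ t, t ∈ Finset.range n₀ → q t = 0 := by
      intro t ht
      refine Polynomial.ext fun s => ?_
      rw [Polynomial.coeff_zero]
      by_cases hs : s < Sb + 1
      · -- use the polynomial ρ_s
        set ρ : Polynomial ↥G := ∑ t' ∈ Finset.range n₀, monomial t' ((q t').coeff s) with hρ
        have hρ0 : ρ = 0 := by
          by_contra hρne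
          apply hna
          refine ⟨ρ, hρne, ?_⟩
          rw [hρ, map_sum]
          have : ∑ t' ∈ Finset.range n₀, Polynomial.aeval a (monomial t' ((q t').coeff s)) = r s := by
            rw [hr]
            exact Finset.sum_congr rfl fun t' _ => by rw [Polynomial.aeval_monomial]; rfl
          rw [this]
          exact hcon s hs
        have := congrArg (fun pp => Polynomial.coeff pp t) hρ0
        simp only [hρ, coeff_sum_monomial, Finset.mem_range.mp ht, if_pos, coeff_zero] at this
        simpa using this
      · push_neg at hs
        refine Polynomial.coeff_eq_zero_of_natDegree_lt ?_
        have : (q t).natDegree ≤ Sb := Finset.le_sup (f := fun t => (q t).natDegree) ht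
        omega
    apply hc0
    have h1 : algebraMap ↥R K (c i0) = (c i0 : K) := rfl
    rw [h1, ← hq i0, hq0 i0 (Finset.mem_range.mpr hi0), map_zero]
  obtain ⟨s0, hs0, hrs0⟩ := claim2
  have haa : a ∈ Subfield.closure ((G : Set K) ∪ {a}) :=
    Subfield.subset_closure (Or.inr (Set.mem_singleton a))
  have hmem : ∀ s, r s ∈ Subfield.closure ((G : Set K) ∪ {a}) := by
    intro s
    refine sum_mem fun t _ => ?_
    have hg : ((q t).coeff s : K) ∈ Subfield.closure ((G : Set K) ∪ {a}) :=
      Subfield.subset_closure (Or.inl ((q t).coeff s).2)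
    exact mul_mem hg (pow_mem haa t)
  refine isAlg_of_coeffs b (Sb+1) (fun s => (⟨r s, hmem s⟩ : ↥(Subfield.closure ((G : Set K) ∪ {a})))) ?_ ?_
  · refine ⟨s0, hs0, ?_⟩
    have h2 : algebraMap ↥(Subfield.closure ((G : Set K) ∪ {a})) K ⟨r s0, hmem s0⟩ = r s0 := rfl
    rw [h2]; exact hrs0
  · have h2 : ∀ s, algebraMap ↥(Subfield.closure ((G : Set K) ∪ {a})) K ⟨r s, hmem s⟩ = r s :=
      fun _ => rfl
    simp_rw [h2]; exact claim1


/-- Exchange lemma: if `a` is algebraic over `G(S)` but not over `G`, then some `b ∈ S`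
is algebraic over `G(S \ {b}, a)`. -/
theorem exch (G : Subfield K) (S : Finset K) (a : K) (hna : ¬ IsAlgebraic ↥G a)
    (ha : IsAlgebraic ↥(Subfield.closure ((G : Set K) ∪ ↑S)) a) :
    ∃ b ∈ S, IsAlgebraic ↥(Subfield.closure ((G : Set K) ∪ ((S : Set K) \ {b}) ∪ {a})) b := by
  classical
  induction S using Finset.induction_on with
  | empty =>
    exfalso
    apply hna
    rwa [Finset.coe_empty, Set.union_empty, Subfield.closure_eq] at ha
  | @insert b T hbT ih =>
    by_cases hT : IsAlgebraic ↥(Subfield.closure ((G : Set K) ∪ ↑T)) a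
    · obtain ⟨c, hcT, hc⟩ := ih hT
      refine ⟨c, Finset.mem_insert_of_mem hcT, isAlg_mono ?_ hc⟩
      apply Subfield.closure_mono
      apply Set.union_subset_union_left
      apply Set.union_subset_union_right
      refine Set.diff_subset_diff_left ?_
      rw [Finset.coe_insert]
      exact Set.subset_insert b ↑T
    · set G' := Subfield.closure ((G : Set K) ∪ ↑T) with hG'
      have hset : ((G : Set K) ∪ (↑(insert b T) : Set K)) = (((G : Set K) ∪ ↑T) ∪ {b}) := by
        rw [Finset.coe_insert]
        ext w
        simp only [Set.mem_union, Set.mem_insert_iff, Finset.mem_coe, Set.mem_singleton_iff]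
        tauto
      have ha' : IsAlgebraic ↥(Subfield.closure ((G' : Set K) ∪ {b})) a := by
        rw [hG', closure_closure_union, ← hset]
        exact ha
      have hb := two_elem G' a b hT ha'
      rw [hG', closure_closure_union] at hb
      refine ⟨b, Finset.mem_insert_self b T, isAlg_mono ?_ hb⟩
      apply Subfield.closure_mono
      apply Set.union_subset_union_left
      intro w hw
      rcases hw with hw | hw
      · exact Or.inl hw
      · refine Or.inr ?_
        refine ⟨?_, ?_⟩
        · rw [Finset.coe_insert]; exact Set.mem_insert_of_mem b hw
        · intro hwb
          rw [Set.mem_singleton_iff] at hwb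
          exact hbT (hwb ▸ hw)


set_option maxHeartbeats 1000000 in
set_option synthInstance.maxHeartbeats 400000 in
/-- In characteristic zero, if `δ` maps a subfield `E` into algebraic elements over `E`,
then `δ` maps algebraic elements over `E` to algebraic elements over `E`. -/
theorem deriv_isAlg [CharZero K] (δ : Derivation ℤ K K) (E : Subfield K)
    (hE : ∀ a ∈ E, IsAlgebraic ↥E (δ a)) {w : K} (hw : IsAlgebraic ↥E w) :
    IsAlgebraic ↥E (δ w) := by
  classical
  have hInt : IsIntegral ↥E w := isAlgebraic_iff_isIntegral.mp hw
  set A := algebraicClosure ↥E K with hA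
  set p := minpoly ↥E w with hp
  have hp0 : p ≠ 0 := minpoly.ne_zero hInt
  set n := p.natDegree with hn
  have hnpos : 0 < n := minpoly.natDegree_pos hInt
  have hrel : ∑ t ∈ Finset.range (n+1), (p.coeff t : K) * w ^ t = 0 := by
    have h3 := p.as_sum_range' (n + 1) (Nat.lt_succ_self _)
    calc ∑ t ∈ Finset.range (n+1), (p.coeff t : K) * w ^ t = Polynomial.aeval w p := by
          conv_rhs => rw [h3]
          rw [map_sum]
          exact Finset.sum_congr rfl fun t _ => by rw [Polynomial.aeval_monomial]; rfl
      _ = 0 := minpoly.aeval ↥E w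
  set D1 : K := ∑ t ∈ Finset.range n, (p.coeff (t+1) : K) * ((t+1 : ℕ) : K) * w ^ t with hD1
  set S2 : K := ∑ t ∈ Finset.range (n+1), w ^ t * δ ((p.coeff t : K)) with hS2
  have hkey : D1 * δ w + S2 = 0 := by
    have h0 : δ (∑ t ∈ Finset.range (n+1), (p.coeff t : K) * w ^ t) = 0 := by
      rw [hrel]; exact map_zero δ
    rw [map_sum] at h0
    have hterm : ∀ t, δ ((p.coeff t : K) * w ^ t) =
        (p.coeff t : K) * ((t : K) * (w ^ (t-1) * δ w)) + w ^ t * δ ((p.coeff t : K)) := by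
      intro t
      rw [Derivation.leibniz, Derivation.leibniz_pow, smul_eq_mul, smul_eq_mul, smul_eq_mul,
        nsmul_eq_mul]
      try ring
    simp_rw [hterm] at h0
    rw [Finset.sum_add_distrib] at h0
    have hre : ∑ t ∈ Finset.range (n+1), (p.coeff t : K) * ((t : K) * (w ^ (t-1) * δ w))
        = D1 * δ w := by
      rw [Finset.sum_range_succ']
      simp only [Nat.cast_zero, zero_mul, mul_zero, add_zero]
      rw [hD1, Finset.sum_mul]
      refine Finset.sum_congr rfl fun t ht => ?_
      have ht1 : (t + 1) - 1 = t := rfl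
      rw [ht1]
      push_cast
      ring
    rw [hre] at h0
    exact h0
  have hD1ne : D1 ≠ 0 := by
    intro h0
    set ρ : Polynomial ↥E :=
      ∑ t ∈ Finset.range n, monomial t (p.coeff (t+1) * ((t+1 : ℕ) : ↥E)) with hρ
    have haρ : Polynomial.aeval w ρ = D1 := by
      rw [hρ, map_sum, hD1]
      refine Finset.sum_congr rfl fun t _ => ?_
      rw [Polynomial.aeval_monomial, map_mul, map_natCast]
      rfl
    have hcoeff : ρ.coeff (n-1) = p.coeff n * ((n : ℕ) : ↥E) := by
      rw [hρ, coeff_sum_monomial, if_pos (by omega)]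
      have hne : n - 1 + 1 = n := by omega
      rw [hne]
    have hρne : ρ ≠ 0 := by
      intro hz
      have hc := congrArg (fun q => Polynomial.coeff q (n-1)) hz
      simp only [Polynomial.coeff_zero] at hc
      rw [hcoeff] at hc
      have hmon : p.coeff n = 1 := by
        have := (minpoly.monic hInt)
        exact this.leadingCoeff
      rw [hmon, one_mul] at hc
      exact hnpos.ne' (Nat.cast_eq_zero.mp hc)
    have hdeg : ρ.degree < p.degree := by
      have h1 : ρ.degree ≤ ((n-1 : ℕ) : WithBot ℕ) := by
        rw [hρ]
        refine (Polynomial.degree_sum_le _ _).trans ?_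
        refine Finset.sup_le fun t ht => ?_
        refine (Polynomial.degree_monomial_le _ _).trans ?_
        exact_mod_cast Nat.cast_le.mpr (Nat.le_sub_one_of_lt (Finset.mem_range.mp ht))
      have h2 : p.degree = (n : WithBot ℕ) := Polynomial.degree_eq_natDegree hp0
      rw [h2]
      refine lt_of_le_of_lt h1 ?_
      exact_mod_cast (by omega : n - 1 < n)
    exact absurd (minpoly.degree_le_of_ne_zero ↥E w hρne (by rw [haρ]; exact h0))
      (not_le.mpr hdeg)
  have hδw : δ w = -S2 / D1 := by
    rw [eq_div_iff hD1ne]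
    linear_combination hkey
  have hwA : w ∈ A := mem_algebraicClosure_iff.mpr hw
  have hS2A : S2 ∈ A := by
    refine sum_mem fun t _ => ?_
    exact mul_mem (pow_mem hwA t) (mem_algebraicClosure_iff.mpr (hE _ (p.coeff t).2))
  have hD1A : D1 ∈ A := by
    refine sum_mem fun t _ => ?_
    refine mul_mem (mul_mem ?_ ?_) (pow_mem hwA t)
    · exact A.algebraMap_mem (p.coeff (t+1))
    · have : ((t+1 : ℕ) : K) = algebraMap ↥E K ((t+1 : ℕ) : ↥E) := by rw [map_natCast]
      rw [this]
      exact A.algebraMap_mem _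
  rw [hδw]
  exact mem_algebraicClosure_iff.mp (div_mem (neg_mem hS2A) hD1A)

end Exchange

set_option maxHeartbeats 2000000 in
set_option synthInstance.maxHeartbeats 400000 in
/-- Let `k ⊆ K` be a field extension of transcendence degree `N` (char 0), with a
derivation `δ` of `K` mapping `k` into itself, and `y₁, …, y_m ∈ K`.  Let `L` be
the subfield of `K` generated over `k` by the `δʲ(yᵢ)` for `j ≤ N`.  Then each
`δ^(N+1)(yᵢ)` is algebraic over `L`; in particular every `δʲ(yᵢ)` (any `j ≥ 0`)
is algebraic over `L`. -/
theorem deriv_algebraic_over_low_order_field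
    (k K : Type*) [Field k] [Field K] [Algebra k K] [CharZero k]
    (N : ℕ) (htr : ∃ x : Fin N → K, IsTranscendenceBasis k x)
    (δ : Derivation ℤ K K)
    (hδk : ∀ a : k, ∃ b : k, δ (algebraMap k K a) = algebraMap k K b)
    {m : ℕ} (y : Fin m → K)
    (L : IntermediateField k K)
    (hL : L = IntermediateField.adjoin k {z : K | ∃ i, ∃ j ≤ N, z = (⇑δ)^[j] (y i)}) :
    (∀ i, IsAlgebraic L ((⇑δ)^[N + 1] (y i))) ∧
      ∀ i, ∀ j : ℕ, IsAlgebraic L ((⇑δ)^[j] (y i)) := by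
  classical
  haveI : CharZero K := charZero_of_injective_algebraMap (algebraMap k K).injective
  obtain ⟨x, hx⟩ := htr
  set F : Subfield K := (algebraMap k K).fieldRange with hF
  have hFcoe : (F : Set K) = Set.range (algebraMap k K) := rfl
  -- everything in K is algebraic over F(x)
  have hKalg : ∀ w : K, IsAlgebraic ↥(Subfield.closure ((F : Set K) ∪ Set.range x)) w := by
    intro w
    have h1 : IsAlgebraic ↥(IntermediateField.adjoin k (Set.range x)) w :=
      (hx.isAlgebraic_field).isAlgebraic w
    have hmem : ∀ u, u ∈ IntermediateField.adjoin k (Set.range x) →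
        u ∈ Subfield.closure ((F : Set K) ∪ Set.range x) := by
      intro u hu
      rw [hFcoe, ← IntermediateField.adjoin_toSubfield]
      exact (IntermediateField.mem_toSubfield _ _).mpr hu
    exact isAlg_transfer (K := K)
      (f := { toFun := fun a => (⟨a.1, hmem a.1 a.2⟩ :
                ↥(Subfield.closure ((F : Set K) ∪ Set.range x))),
              map_one' := rfl, map_mul' := fun _ _ => rfl,
              map_zero' := rfl, map_add' := fun _ _ => rfl }) (fun a => rfl) h1
  have main : ∀ (i : Fin m) (t : ℕ), IsAlgebraic L ((⇑δ)^[t] (y i)) := by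
    intro i
    set z : ℕ → K := fun t => (⇑δ)^[t] (y i) with hz
    -- Step 1: some z j (j ≤ N) is algebraic over F(z_0, ..., z_{j-1})
    have hstep1 : ∃ j ≤ N,
        IsAlgebraic ↥(Subfield.closure ((F : Set K) ∪ z '' Set.Iio j)) (z j) := by
      by_contra hno
      push_neg at hno
      have claim : ∀ j : ℕ, j ≤ N → ∃ s : Finset (Fin N), s.card + j = N ∧
          ∀ i' : Fin N, IsAlgebraic
            ↥(Subfield.closure ((F : Set K) ∪ z '' Set.Iio j ∪ x '' ↑s)) (x i') := by
        intro j
        induction j with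
        | zero =>
          intro _
          refine ⟨Finset.univ, by simp, fun i' => mem_isAlg (Subfield.subset_closure ?_)⟩
          exact Or.inr ⟨i', Finset.mem_coe.mpr (Finset.mem_univ i'), rfl⟩
        | succ j ih =>
          intro hj1
          obtain ⟨s, hcard, halg⟩ := ih (by omega)
          -- z j is algebraic over the mixed field M
          have haz : IsAlgebraic
              ↥(Subfield.closure ((F : Set K) ∪ z '' Set.Iio j ∪ x '' ↑s)) (z j) := by
            refine isAlg_trans _ (Set.range x) (by rintro u ⟨i', rfl⟩; exact halg i') ?_
            refine isAlg_mono ?_ (hKalg (z j))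
            refine Subfield.closure_le.mpr ?_
            rintro w (hw | hw)
            · exact Subfield.subset_closure (Or.inl (Subfield.subset_closure (Or.inl (Or.inl hw))))
            · exact Subfield.subset_closure (Or.inr hw)
          have hna : ¬ IsAlgebraic
              ↥(Subfield.closure ((F : Set K) ∪ z '' Set.Iio j)) (z j) := hno j (by omega)
          have haz' : IsAlgebraic ↥(Subfield.closure
              ((↑(Subfield.closure ((F : Set K) ∪ z '' Set.Iio j)) : Set K)
                ∪ ↑(s.image x))) (z j) := by
            rw [closure_closure_union, Finset.coe_image]
            exact haz
          obtain ⟨b, hbmem, hb⟩ := exch _ (s.image x) (z j) hna haz'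
          obtain ⟨i₀, hi₀s, rfl⟩ := Finset.mem_image.mp hbmem
          refine ⟨s.erase i₀, by rw [Finset.card_erase_of_mem hi₀s]; omega, ?_⟩
          have hsub1 : Subfield.closure ((F : Set K) ∪ z '' Set.Iio j)
              ≤ Subfield.closure ((F : Set K) ∪ z '' Set.Iio (j+1) ∪ x '' ↑(s.erase i₀)) := by
            refine Subfield.closure_le.mpr ?_
            rintro w (hw | hw)
            · exact Subfield.subset_closure (Or.inl (Or.inl hw))
            · obtain ⟨t, ht, rfl⟩ := hw
              exact Subfield.subset_closure (Or.inl (Or.inr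
                ⟨t, Set.mem_Iio.mpr (lt_trans (Set.mem_Iio.mp ht) (Nat.lt_succ_self j)), rfl⟩))
          have hbM' : IsAlgebraic
              ↥(Subfield.closure ((F : Set K) ∪ z '' Set.Iio (j+1) ∪ x '' ↑(s.erase i₀)))
              (x i₀) := by
            refine isAlg_mono ?_ hb
            refine Subfield.closure_le.mpr ?_
            rintro w ((hw | hw) | hw)
            · exact hsub1 hw
            · obtain ⟨hw1, hne⟩ := hw
              obtain ⟨i'', hi'', rfl⟩ := Finset.mem_image.mp (Finset.mem_coe.mp hw1)
              refine Subfield.subset_closure (Or.inr ⟨i'', ?_, rfl⟩)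
              refine Finset.mem_coe.mpr (Finset.mem_erase.mpr ⟨?_, hi''⟩)
              rintro rfl
              exact hne rfl
            · rw [Set.mem_singleton_iff] at hw
              subst hw
              exact Subfield.subset_closure (Or.inl (Or.inr ⟨j, Set.mem_Iio.mpr (Nat.lt_succ_self j), rfl⟩))
          intro i'
          refine isAlg_trans _ {x i₀} (by rintro u hu; rw [Set.mem_singleton_iff] at hu; subst hu; exact hbM') ?_
          refine isAlg_mono ?_ (halg i')
          refine Subfield.closure_le.mpr ?_
          rintro w ((hw | hw) | hw)
          · exact Subfield.subset_closure (Or.inl (hsub1 (Subfield.subset_closure (Or.inl hw))))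
          · exact Subfield.subset_closure (Or.inl (hsub1 (Subfield.subset_closure (Or.inr hw))))
          · obtain ⟨i'', hi'', rfl⟩ := hw
            by_cases hii : i'' = i₀
            · subst hii
              exact Subfield.subset_closure (Or.inr rfl)
            · refine Subfield.subset_closure (Or.inl ?_)
              refine Subfield.subset_closure (Or.inr ⟨i'', Finset.mem_coe.mpr (Finset.mem_erase.mpr ⟨hii, hi''⟩), rfl⟩)
      obtain ⟨s, hcard, halg⟩ := claim N le_rfl
      have hs0 : s = ∅ := Finset.card_eq_zero.mp (by omega)
      subst hs0
      apply hno N le_rfl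
      have hempty : (x '' ↑(∅ : Finset (Fin N))) = (∅ : Set K) := by simp
      refine isAlg_trans _ (Set.range x) ?_ ?_
      · rintro u ⟨i', rfl⟩
        have := halg i'
        rwa [hempty, Set.union_empty] at this
      · refine isAlg_mono ?_ (hKalg (z N))
        refine Subfield.closure_le.mpr ?_
        rintro w (hw | hw)
        · exact Subfield.subset_closure (Or.inl (Subfield.subset_closure (Or.inl hw)))
        · exact Subfield.subset_closure (Or.inr hw)
    obtain ⟨j, hjN, hjalg⟩ := hstep1
    -- Step 2: E = F(z_0, ..., z_{j-1}) has δ-stable algebraic closure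
    have hE : ∀ a ∈ Subfield.closure ((F : Set K) ∪ z '' Set.Iio j),
        IsAlgebraic ↥(Subfield.closure ((F : Set K) ∪ z '' Set.Iio j)) (δ a) := by
      intro a ha
      induction ha using Subfield.closure_induction with
      | mem u hu =>
        rcases hu with hu | hu
        · obtain ⟨a', rfl⟩ := hu
          obtain ⟨b', hb'⟩ := hδk a'
          rw [hb']
          exact mem_isAlg (Subfield.subset_closure (Or.inl ⟨b', rfl⟩))
        · obtain ⟨t, ht, rfl⟩ := hu
          have hzt : δ (z t) = z (t+1) := (Function.iterate_succ_apply' (⇑δ) t (y i)).symm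
          rw [hzt]
          rcases Nat.lt_or_ge (t+1) j with h1 | h1
          · exact mem_isAlg (Subfield.subset_closure (Or.inr ⟨t+1, Set.mem_Iio.mpr h1, rfl⟩))
          · have : t + 1 = j := by
              have := Set.mem_Iio.mp ht
              omega
            rw [this]
            exact hjalg
      | one =>
        rw [Derivation.map_one_eq_zero]
        exact mem_isAlg (Subfield.zero_mem _)
      | add u v hu hv ihu ihv =>
        rw [map_add]
        exact mem_algebraicClosure_iff.mp (add_mem (mem_algebraicClosure_iff.mpr ihu)
          (mem_algebraicClosure_iff.mpr ihv))
      | neg u hu ihu =>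
        rw [map_neg]
        exact mem_algebraicClosure_iff.mp (neg_mem (mem_algebraicClosure_iff.mpr ihu))
      | inv u hu ihu =>
        by_cases hu0 : u = 0
        · subst hu0
          rw [inv_zero]
          exact ihu
        · have h1 : u⁻¹ = 1 / u := (one_div u).symm
          rw [h1, Derivation.leibniz_div, Derivation.map_one_eq_zero]
          have huA : u ∈ algebraicClosure
              ↥(Subfield.closure ((F : Set K) ∪ z '' Set.Iio j)) K :=
            mem_algebraicClosure_iff.mpr (mem_isAlg hu)
          refine mem_algebraicClosure_iff.mp ?_
          rw [smul_eq_mul, smul_eq_mul, smul_eq_mul]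
          refine mul_mem (pow_mem (inv_mem huA) 2) ?_
          refine sub_mem (by rw [mul_zero]; exact zero_mem _) ?_
          exact mul_mem (one_mem _) (mem_algebraicClosure_iff.mpr ihu)
      | mul u v hu hv ihu ihv =>
        rw [Derivation.leibniz, smul_eq_mul, smul_eq_mul]
        refine mem_algebraicClosure_iff.mp ?_
        refine add_mem ?_ ?_
        · exact mul_mem (mem_algebraicClosure_iff.mpr (mem_isAlg hu))
            (mem_algebraicClosure_iff.mpr ihv)
        · exact mul_mem (mem_algebraicClosure_iff.mpr (mem_isAlg hv))
            (mem_algebraicClosure_iff.mpr ihu)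
    -- all z t are algebraic over E
    have hall : ∀ t, IsAlgebraic ↥(Subfield.closure ((F : Set K) ∪ z '' Set.Iio j)) (z t) := by
      intro t
      induction t with
      | zero =>
        rcases Nat.eq_zero_or_pos j with hj0 | hj0
        · subst hj0
          exact hjalg
        · exact mem_isAlg (Subfield.subset_closure (Or.inr ⟨0, Set.mem_Iio.mpr hj0, rfl⟩))
      | succ t iht =>
        have hzt : z (t+1) = δ (z t) := Function.iterate_succ_apply' (⇑δ) t (y i)
        rw [hzt]
        exact deriv_isAlg δ _ hE iht
    -- transfer to L
    have hEL : ∀ w ∈ Subfield.closure ((F : Set K) ∪ z '' Set.Iio j), w ∈ L := by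
      intro w hw
      have h2 : Subfield.closure ((F : Set K) ∪ z '' Set.Iio j) ≤ L.toSubfield := by
        refine Subfield.closure_le.mpr ?_
        rintro u (hu | hu)
        · obtain ⟨a', rfl⟩ := hu
          exact (IntermediateField.mem_toSubfield _ _).mpr (L.algebraMap_mem a')
        · obtain ⟨t, ht, rfl⟩ := hu
          refine (IntermediateField.mem_toSubfield _ _).mpr ?_
          rw [hL]
          refine IntermediateField.subset_adjoin k _ ?_
          exact ⟨i, t, by have := Set.mem_Iio.mp ht; omega, rfl⟩
      exact (IntermediateField.mem_toSubfield _ _).mp (h2 hw)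
    intro t
    refine isAlg_transfer (K := K)
      (f := { toFun := fun a => (⟨a.1, hEL a.1 a.2⟩ : ↥L),
              map_one' := rfl, map_mul' := fun _ _ => rfl,
              map_zero' := rfl, map_add' := fun _ _ => rfl }) (fun a => rfl) (hall t)
  exact ⟨fun i => main i (N+1), main⟩
end

section
/- Let q be the common denominator polynomial and v_0 the numerator of a rational function g = v_0/q in N variables, and let f_1, …, f_n be polynomials of degree ≤ d_0 and height ≤ h_0. Define the sequence v_{j+1} := Σ_i f_i (q ∂_i v_j − (2j+1) v_j ∂_i q). Then v_j / q^{2j+1} equals L^j g where L = (Σ f_i ∂_i)/q, and deg v_j ≤ (2j+1)d_0 − j when deg v_0, deg q ≤ d_0. -/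
open MvPolynomial

lemma aux_totalDegree_pderiv_le {N : ℕ} (i : Fin N) (p : MvPolynomial (Fin N) ℤ) :
    (pderiv i p).totalDegree ≤ p.totalDegree - 1 := by
  conv_lhs => rw [p.as_sum]
  rw [map_sum]
  refine (totalDegree_finset_sum _ _).trans (Finset.sup_le fun m hm => ?_)
  rw [pderiv_monomial]
  by_cases hz : coeff m p * (m i : ℤ) = 0
  · simp [hz]
  · rw [totalDegree_monomial _ hz]
    have hmi : m i ≠ 0 := by
      rintro h
      simp [h] at hz
    have hle : Finsupp.single i 1 ≤ m := by
      rw [Finsupp.single_le_iff]; omega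
    have hms : m = (m - Finsupp.single i 1) + Finsupp.single i 1 :=
      (tsub_add_cancel_of_le hle).symm
    have hsum : (m.sum fun _ e => e) =
        ((m - Finsupp.single i 1).sum fun _ e => e) + 1 := by
      conv_lhs => rw [hms]
      rw [Finsupp.sum_add_index' (fun _ => rfl) (fun _ _ _ => rfl)]
      simp
    have hmle : (m.sum fun _ e => e) ≤ p.totalDegree := le_totalDegree hm
    omega

set_option synthInstance.maxHeartbeats 1000000 in
set_option maxHeartbeats 1000000 in
/-- Let `g = v₀/q` be a rational function in `N` variables over `ℤ`, let
`f₁, …, f_N` be polynomials of total degree at most `d₀`, and let `L` be the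
derivation `(Σ fᵢ ∂ᵢ)/q` acting on rational functions.  Define
`v_{j+1} := Σᵢ fᵢ (q ∂ᵢ v_j − (2j+1) v_j ∂ᵢ q)`.  Then `Lʲ g = v_j / q^(2j+1)`,
and if moreover `deg v₀ ≤ d₀` and `deg q ≤ d₀` then `deg v_j ≤ (2j+1)d₀ − j`. -/
theorem numerator_recurrence_lie_derivative
    (N : ℕ) (q v₀ : MvPolynomial (Fin N) ℤ) (hq : q ≠ 0)
    (f : Fin N → MvPolynomial (Fin N) ℤ) (d₀ : ℕ)
    (hf : ∀ i, (f i).totalDegree ≤ d₀)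
    (v : ℕ → MvPolynomial (Fin N) ℤ)
    (hv0 : v 0 = v₀)
    (hvrec : ∀ j, v (j + 1) =
      ∑ i, f i * (q * pderiv i (v j) -
        ((2 * j + 1 : ℕ) : MvPolynomial (Fin N) ℤ) * v j * pderiv i q))
    (L : FractionRing (MvPolynomial (Fin N) ℤ) → FractionRing (MvPolynomial (Fin N) ℤ))
    (hLadd : ∀ x y, L (x + y) = L x + L y)
    (hLmul : ∀ x y, L (x * y) = L x * y + x * L y)
    (hLpoly : ∀ p : MvPolynomial (Fin N) ℤ,
      L (algebraMap _ (FractionRing (MvPolynomial (Fin N) ℤ)) p) =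
        algebraMap _ _ (∑ i, f i * pderiv i p) / algebraMap _ _ q) :
    ∀ j : ℕ,
      L^[j] (algebraMap _ (FractionRing (MvPolynomial (Fin N) ℤ)) v₀ /
          algebraMap _ _ q) =
        algebraMap _ _ (v j) / (algebraMap _ _ q) ^ (2 * j + 1) ∧
      (v₀.totalDegree ≤ d₀ → q.totalDegree ≤ d₀ →
        (v j).totalDegree ≤ (2 * j + 1) * d₀ - j) := by
  set φ := algebraMap (MvPolynomial (Fin N) ℤ) (FractionRing (MvPolynomial (Fin N) ℤ)) with hφ
  have hq' : φ q ≠ 0 :=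
    (map_ne_zero_iff φ (IsFractionRing.injective _ _)).mpr hq
  have hLpow : ∀ k : ℕ, L (φ q ^ (k + 1)) = ((k + 1 : ℕ) : _) * φ q ^ k * L (φ q) := by
    intro k
    induction k with
    | zero => simp
    | succ k ihk =>
      rw [pow_succ, hLmul, ihk]
      push_cast
      ring
  intro j
  induction j with
  | zero =>
    constructor
    · simp [hv0]
    · intro h1 _
      simpa [hv0] using h1
  | succ j ih =>
    obtain ⟨ih1, ih2⟩ := ih
    constructor
    · -- the formula
      rw [Function.iterate_succ_apply', ih1]
      set A := ∑ i, f i * pderiv i (v j) with hA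
      set B := ∑ i, f i * pderiv i q with hB
      have hvsucc : v (j + 1) = q * A -
          ((2 * j + 1 : ℕ) : MvPolynomial (Fin N) ℤ) * v j * B := by
        rw [hvrec, hA, hB, Finset.mul_sum, Finset.mul_sum, ← Finset.sum_sub_distrib]
        exact Finset.sum_congr rfl fun i _ => by ring
      have hQ : (φ q) ^ (2 * j + 1) ≠ 0 := pow_ne_zero _ hq'
      have e2 := hLmul (φ (v j) / φ q ^ (2 * j + 1)) (φ q ^ (2 * j + 1))
      rw [div_mul_cancel₀ _ hQ] at e2
      have e3 : L (φ (v j) / φ q ^ (2 * j + 1)) =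
          (L (φ (v j)) - φ (v j) / φ q ^ (2 * j + 1) * L (φ q ^ (2 * j + 1))) /
            φ q ^ (2 * j + 1) := by
        rw [eq_div_iff hQ]
        linear_combination -e2
      rw [e3, hLpow (2 * j), hLpoly, hLpoly, hvsucc]
      rw [map_sub, map_mul, map_mul, map_mul, map_natCast]
      rw [← hA, ← hB]
      field_simp
      ring
    · -- the degree bound
      intro h1 h2
      have hD := ih2 h1 h2
      set D := (v j).totalDegree with hDdef
      rw [hvrec]
      refine (totalDegree_finset_sum _ _).trans (Finset.sup_le fun i _ => ?_)
      have hcast : ((2 * j + 1 : ℕ) : MvPolynomial (Fin N) ℤ).totalDegree = 0 := by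
        rw [← C_eq_coe_nat]
        exact totalDegree_C _
      have key : (f i * (q * pderiv i (v j) -
          ((2 * j + 1 : ℕ) : MvPolynomial (Fin N) ℤ) * v j * pderiv i q)).totalDegree ≤
          d₀ + max (d₀ + (D - 1)) (D + (d₀ - 1)) := by
        refine (totalDegree_mul _ _).trans (add_le_add (hf i) ?_)
        refine (totalDegree_sub _ _).trans (max_le_max ?_ ?_)
        · exact (totalDegree_mul _ _).trans (add_le_add h2 (aux_totalDegree_pderiv_le _ _))
        · refine (totalDegree_mul _ _).trans ?_
          refine add_le_add ?_ ((aux_totalDegree_pderiv_le _ _).trans (by omega))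
          refine (totalDegree_mul _ _).trans ?_
          rw [hcast]
          simp
          exact le_of_eq hDdef.symm
      refine key.trans ?_
      have hmul : (2 * (j + 1) + 1) * d₀ = (2 * j + 1) * d₀ + 2 * d₀ := by ring
      rw [hmul]
      set K := (2 * j + 1) * d₀ with hK
      have hz : d₀ = 0 → K = 0 := fun h => by simp [hK, h]
      have hge : 1 ≤ d₀ → j + 1 ≤ K := by
        intro h
        calc j + 1 ≤ (2 * j + 1) * 1 := by omega
        _ ≤ K := Nat.mul_le_mul_left _ h
      omega
end
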